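/- For all n ≥ k + 4 with k ≥ 5, ssat(n, C_k) ≤ n + ⌊(n−7)/(k−3)⌋ + k − 3; in particular ssat(n, C₆) ≤ ⌈4n/3⌉ for n ≥ 10. -/

import Mathlib

open SimpleGraph

/-- `G` contains a cycle of length `k`. -/
def hasCycleLength {V : Type*} (G : SimpleGraph V) (k : ℕ) : Prop :=
  ∃ (v : V) (c : G.Walk v v), c.IsCycle ∧ c.length = k

/-- The graph `G` together with the extra edge `uv`. -/
def addEdge {V : Type*} (G : SimpleGraph V) (u v : V) : SimpleGraph V :=
  G ⊔ SimpleGraph.fromEdgeSet {s(u, v)}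

/-- `G` is `C_k`-semisaturated: adding any non-edge `uv` creates a new `k`-cycle,
i.e. a `k`-cycle through the edge `uv`. -/
def IsCkSemisaturated {V : Type*} (k : ℕ) (G : SimpleGraph V) : Prop :=
  ∀ u v : V, u ≠ v → ¬ G.Adj u v →
    ∃ (w : V) (c : (addEdge G u v).Walk w w),
      c.IsCycle ∧ c.length = k ∧ s(u, v) ∈ c.edges

/-- `G` is `C_k`-saturated: it has no `k`-cycle, but adding any non-edge creates one. -/
def IsCkSaturated {V : Type*} (k : ℕ) (G : SimpleGraph V) : Prop :=
  ¬ hasCycleLength G k ∧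
    ∀ u v : V, u ≠ v → ¬ G.Adj u v → hasCycleLength (addEdge G u v) k

/-- `sat(n, C_k)`: minimum number of edges of a `C_k`-saturated graph on `n` vertices. -/
noncomputable def satNum (n k : ℕ) : ℕ :=
  sInf {m : ℕ | ∃ G : SimpleGraph (Fin n), IsCkSaturated k G ∧ G.edgeSet.ncard = m}

/-- `ssat(n, C_k)`: minimum number of edges of a `C_k`-semisaturated graph on `n` vertices. -/
noncomputable def ssatNum (n k : ℕ) : ℕ :=
  sInf {m : ℕ | ∃ G : SimpleGraph (Fin n), IsCkSemisaturated k G ∧ G.edgeSet.ncard = m}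


set_option maxHeartbeats 2000000

namespace SSAT


/-- wheel base adjacency: hub `0`, rim `1..k-1` in a cycle. -/
def Wb (k a b : ℕ) : Prop :=
  (a = 0 ∧ 1 ≤ b ∧ b < k) ∨ (1 ≤ a ∧ b = a + 1 ∧ b < k) ∨ (a = 1 ∧ b = k - 1)

def RB (k t r a b : ℕ) : Prop :=
  Wb k a b ∨
  (a = 1 ∧ ∃ p, p < t ∧ b = k + p * (k - 3)) ∨
  (∃ p, p < t ∧ ∃ j, j + 1 < k - 3 ∧ a = k + p * (k - 3) + j ∧ b = a + 1) ∨
  (b = 2 ∧ ∃ p, p < t ∧ a = k + p * (k - 3) + (k - 4)) ∨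
  (∃ i, i < r ∧ a = i ∧ b = k + t * (k - 3) + i)

def S (k t r a b : ℕ) : Prop := RB k t r a b ∨ RB k t r b a

def wS (k a b : ℕ) : Prop := Wb k a b ∨ Wb k b a

lemma wS.S {k t r a b : ℕ} (h : wS k a b) : S k t r a b := by
  rcases h with h | h
  · exact Or.inl (Or.inl h)
  · exact Or.inr (Or.inl h)

lemma S_symm {k t r a b : ℕ} (h : S k t r a b) : S k t r b a := h.symm

lemma wS_symm {k a b : ℕ} (h : wS k a b) : wS k b a := h.symm

/-- existence of a path of length `L` from `x` to `y` inside the wheel. -/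
def WSpec (k x y L : ℕ) : Prop :=
  ∃ g : ℕ → ℕ, g 0 = x ∧ g L = y ∧ (∀ i, i < L → wS k (g i) (g (i + 1))) ∧
    (∀ i, i ≤ L → g i < k) ∧ (∀ i j, i ≤ L → j ≤ L → g i = g j → i = j)

lemma WSpec.symm {k x y L : ℕ} (h : WSpec k x y L) : WSpec k y x L := by
  obtain ⟨g, h0, hL, hc, hb, hinj⟩ := h
  refine ⟨fun i => g (L - i), by simpa, by simpa, ?_, ?_, ?_⟩
  · intro i hi
    show wS k (g (L - i)) (g (L - (i + 1)))
    have h1 := hc (L - i - 1) (by omega)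
    have e1 : L - i - 1 + 1 = L - i := by omega
    have e2 : L - (i + 1) = L - i - 1 := by omega
    rw [e1] at h1
    rw [e2]
    exact wS_symm h1
  · intro i _; exact hb _ (by omega)
  · intro i j hi hj hij
    have := hinj (L - i) (L - j) (by omega) (by omega) hij
    omega


lemma fam_L1 {k x y : ℕ} (hx : x < k) (hy : y < k) (hxy : x ≠ y) (h : wS k x y) :
    WSpec k x y 1 := by
  refine ⟨fun i => if i = 0 then x else y, by simp, by simp, ?_, ?_, ?_⟩
  · intro i hi
    have : i = 0 := by omega
    subst this; simpa using h
  · intro i _; dsimp only; split_ifs <;> assumption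
  · intro i j hi hj hij; dsimp only at hij; split_ifs at hij <;> omega

lemma fam_hubdesc {k y L : ℕ} (hk : 5 ≤ k) (hy : 1 ≤ y) (hyk : y < k)
    (hL2 : 2 ≤ L) (hLk : L ≤ k - y) : WSpec k 0 y L := by
  refine ⟨fun i => if i = 0 then 0 else y + L - i, by simp, by simp; omega, ?_, ?_, ?_⟩
  · intro i hi
    show wS k _ _
    simp only [wS, Wb]
    split_ifs <;> first | exact ‹False›.elim | omega
  · intro i _; dsimp only; split_ifs <;> first | exact ‹False›.elim | omega
  · intro i j hi hj hij; dsimp only at hij; split_ifs at hij <;> omega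

lemma fam_hubwrap {k y L : ℕ} (hk : 5 ≤ k) (hy : 1 ≤ y) (hyk : y < k)
    (hL2 : 2 ≤ L) (hL : k - y < L) (hLk : L ≤ k - 1) : WSpec k 0 y L := by
  -- 0, c, c-1, ..., 1, k-1, k-2, ..., y  with c = L + y - k
  refine ⟨fun i => if i = 0 then 0 else if i ≤ L + y - k then L + y - k + 1 - i
      else k + (L + y - k) - i, by simp, ?_, ?_, ?_, ?_⟩
  · dsimp only; split_ifs <;> first | exact ‹False›.elim | omega
  · intro i hi
    show wS k _ _
    simp only [wS, Wb]
    split_ifs <;> first | exact ‹False›.elim | omega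
  · intro i _; dsimp only; split_ifs <;> first | exact ‹False›.elim | omega
  · intro i j hi hj hij; dsimp only at hij; split_ifs at hij <;> omega

lemma fam_C' {k x y L : ℕ} (hk : 5 ≤ k) (hx : 1 ≤ x) (hxy : x < y) (hyk : y < k)
    (hL2 : 2 ≤ L) (hLy : L ≤ y) : WSpec k x y L := by
  -- x, x-1, ..., x-e, 0, c, c+1, ..., y  with e = min (x-1) (L-2)
  obtain ⟨e, h1, h2, h3⟩ : ∃ e, e ≤ x - 1 ∧ e ≤ L - 2 ∧ (x - 1 ≤ e ∨ L - 2 ≤ e) := by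
    refine ⟨min (x-1) (L-2), Nat.min_le_left _ _, Nat.min_le_right _ _, ?_⟩
    rcases Nat.le_total (x-1) (L-2) with h | h
    · left; rw [Nat.min_eq_left h]
    · right; rw [Nat.min_eq_right h]
  refine ⟨fun i => if i ≤ e then x - i else if i = e + 1 then 0 else y + i - L,
    by simp, ?_, ?_, ?_, ?_⟩
  · dsimp only; split_ifs <;> first | exact ‹False›.elim | omega
  · intro i hi
    show wS k _ _
    simp only [wS, Wb]
    split_ifs <;> first | exact ‹False›.elim | omega
  · intro i _; dsimp only; split_ifs <;> first | exact ‹False›.elim | omega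
  · intro i j hi hj hij; dsimp only at hij; split_ifs at hij <;> first | exact ‹False›.elim | omega

lemma fam_D {k x y L : ℕ} (hk : 5 ≤ k) (hx : 1 ≤ x) (hxy : x < y) (hyk : y < k)
    (hLy : y < L) (hLk : L ≤ k - 1) : WSpec k x y L := by
  -- x, x-1, ..., 1, k-1, k-2, ..., z, 0, c, ..., y  with z = max (y+1) (x+k+1-L)
  obtain ⟨z, h1, h2, h3, hzk⟩ :
      ∃ z, y + 1 ≤ z ∧ x + k + 1 - L ≤ z ∧ (z ≤ y + 1 ∨ z ≤ x + k + 1 - L) ∧ z ≤ k - 1 := by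
    refine ⟨max (y+1) (x+k+1-L), Nat.le_max_left _ _, Nat.le_max_right _ _, ?_, ?_⟩
    · rcases Nat.le_total (y+1) (x+k+1-L) with h | h
      · right; rw [Nat.max_eq_right h]
      · left; rw [Nat.max_eq_left h]
    · rcases Nat.le_total (y+1) (x+k+1-L) with h | h
      · rw [Nat.max_eq_right h]; omega
      · rw [Nat.max_eq_left h]; omega
  refine ⟨fun i => if i ≤ x - 1 then x - i else if i + z ≤ x + k - 1 then k - 1 + x - i
      else if i + z = x + k then 0 else y + i - L,
    by simp, ?_, ?_, ?_, ?_⟩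
  · dsimp only; split_ifs <;> first | exact ‹False›.elim | omega
  · intro i hi
    show wS k _ _
    simp only [wS, Wb]
    split_ifs <;> first | exact ‹False›.elim | omega
  · intro i _; dsimp only; split_ifs <;> first | exact ‹False›.elim | omega
  · intro i j hi hj hij; dsimp only at hij; split_ifs at hij <;> first | exact ‹False›.elim | omega

lemma wheel {k x y L : ℕ} (hk : 5 ≤ k) (hx : x < k) (hy : y < k) (hxy : x ≠ y)
    (hL : (2 ≤ L ∧ L ≤ k - 1) ∨ (L = 1 ∧ wS k x y)) : WSpec k x y L := by
  rcases hL with ⟨hL2, hLk⟩ | ⟨hL1, hadj⟩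
  · rcases Nat.eq_zero_or_pos x with rfl | hx1
    · rcases le_or_gt L (k - y) with h | h
      · exact fam_hubdesc hk (by omega) hy hL2 h
      · exact fam_hubwrap hk (by omega) hy hL2 (by omega) hLk
    rcases Nat.eq_zero_or_pos y with rfl | hy1
    · refine WSpec.symm ?_
      rcases le_or_gt L (k - x) with h | h
      · exact fam_hubdesc hk (by omega) hx hL2 h
      · exact fam_hubwrap hk (by omega) hx hL2 (by omega) hLk
    rcases Nat.lt_or_ge x y with h | h
    · rcases le_or_gt L y with h2 | h2
      · exact fam_C' hk hx1 h hy hL2 h2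
      · exact fam_D hk hx1 h hy (by omega) hLk
    · have h' : y < x := by omega
      refine WSpec.symm ?_
      rcases le_or_gt L x with h2 | h2
      · exact fam_C' hk hy1 h' hx hL2 h2
      · exact fam_D hk hy1 h' hx (by omega) hLk
  · subst hL1; exact fam_L1 hx hy hxy hadj



def Spec (k t r n a b : ℕ) : Prop :=
  ∃ g : ℕ → ℕ, g 0 = a ∧ g (k - 1) = b ∧ (∀ i, i < k - 1 → S k t r (g i) (g (i + 1))) ∧
    (∀ i, i ≤ k - 1 → g i < n) ∧ (∀ i j, i ≤ k - 1 → j ≤ k - 1 → g i = g j → i = j)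

lemma Spec.symm {k t r n a b : ℕ} (h : Spec k t r n a b) : Spec k t r n b a := by
  obtain ⟨g, h0, hL, hc, hb, hinj⟩ := h
  refine ⟨fun i => g (k - 1 - i), by simpa, by simpa, ?_, ?_, ?_⟩
  · intro i hi
    show S k t r (g (k - 1 - i)) (g (k - 1 - (i + 1)))
    have h1 := hc (k - 1 - i - 1) (by omega)
    have e1 : k - 1 - i - 1 + 1 = k - 1 - i := by omega
    have e2 : k - 1 - (i + 1) = k - 1 - i - 1 := by omega
    rw [e1] at h1
    rw [e2]
    exact S_symm h1
  · intro i _; exact hb _ (by omega)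
  · intro i j hi hj hij
    have := hinj (k - 1 - i) (k - 1 - j) (by omega) (by omega) hij
    omega

lemma glue {k t r n : ℕ} {α L β x y : ℕ} {gL gM gR : ℕ → ℕ}
    (hk : 5 ≤ k) (hkn : k ≤ n)
    (hsum : α + L + β = k - 1)
    (hLα : gL α = x) (hM0 : gM 0 = x) (hML : gM L = y) (hR0 : gR 0 = y)
    (cL : ∀ i, i < α → S k t r (gL i) (gL (i + 1)))
    (cM : ∀ i, i < L → wS k (gM i) (gM (i + 1)))
    (cR : ∀ i, i < β → S k t r (gR i) (gR (i + 1)))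
    (bL : ∀ i, i ≤ α → gL i < n)
    (bM : ∀ i, i ≤ L → gM i < k)
    (bR : ∀ i, i ≤ β → gR i < n)
    (iL : ∀ i j, i ≤ α → j ≤ α → gL i = gL j → i = j)
    (iM : ∀ i j, i ≤ L → j ≤ L → gM i = gM j → i = j)
    (iR : ∀ i j, i ≤ β → j ≤ β → gR i = gR j → i = j)
    (sepLM : ∀ i j, i < α → j ≤ L → gL i ≠ gM j)
    (sepMR : ∀ i j, i ≤ L → 0 < j → j ≤ β → gM i ≠ gR j)
    (sepLR : ∀ i j, i < α → 0 < j → j ≤ β → gL i ≠ gR j) :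
    Spec k t r n (gL 0) (gR β) := by
  set g : ℕ → ℕ := fun i => if i < α then gL i else if i ≤ α + L then gM (i - α) else gR (i - α - L)
    with hg
  have hval1 : ∀ i, i < α → g i = gL i := by
    intro i h; simp only [hg]; rw [if_pos h]
  have hval2 : ∀ i, α ≤ i → i ≤ α + L → g i = gM (i - α) := by
    intro i h h'; simp only [hg]; rw [if_neg (by omega), if_pos h']
  have hval3 : ∀ i, α + L < i → g i = gR (i - α - L) := by
    intro i h; simp only [hg]; rw [if_neg (by omega), if_neg (by omega)]
  refine ⟨g, ?_, ?_, ?_, ?_, ?_⟩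
  · rcases Nat.eq_zero_or_pos α with h | h
    · rw [hval2 0 (by omega) (by omega), show (0:ℕ) - α = 0 by omega, hM0, ← hLα, h]
    · exact hval1 0 h
  · rcases Nat.eq_zero_or_pos β with h | h
    · rw [hval2 (k - 1) (by omega) (by omega), show k - 1 - α = L by omega, hML, ← hR0, h]
    · rw [hval3 (k - 1) (by omega), show k - 1 - α - L = β by omega]
  · intro i hi
    by_cases hA : i + 1 < α
    · rw [hval1 i (by omega), hval1 (i + 1) hA]; exact cL i (by omega)
    by_cases hB : i + 1 = α
    · rw [hval1 i (by omega), hval2 (i + 1) (by omega) (by omega),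
        show i + 1 - α = 0 by omega, hM0, ← hLα, ← hB]
      exact cL i (by omega)
    by_cases hC : i + 1 ≤ α + L
    · rw [hval2 i (by omega) (by omega), hval2 (i + 1) (by omega) hC,
        show i + 1 - α = (i - α) + 1 by omega]
      exact (cM (i - α) (by omega)).S
    by_cases hD : i = α + L
    · rw [hval2 i (by omega) (by omega), hval3 (i + 1) (by omega),
        show i - α = L by omega, show i + 1 - α - L = 1 by omega, hML, ← hR0]
      exact cR 0 (by omega)
    · rw [hval3 i (by omega), hval3 (i + 1) (by omega),
        show i + 1 - α - L = (i - α - L) + 1 by omega]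
      exact cR (i - α - L) (by omega)
  · intro i hi
    by_cases h1 : i < α
    · rw [hval1 i h1]; exact bL i (by omega)
    by_cases h2 : i ≤ α + L
    · rw [hval2 i (by omega) h2]; exact lt_of_lt_of_le (bM _ (by omega)) hkn
    · rw [hval3 i (by omega)]; exact bR _ (by omega)
  · intro i j hi hj hij
    by_cases h1 : i < α <;> by_cases h2 : j < α
    · exact iL i j (by omega) (by omega) (by rwa [hval1 i h1, hval1 j h2] at hij)
    · by_cases h3 : j ≤ α + L
      · exact absurd (by rwa [hval1 i h1, hval2 j (by omega) h3] at hij)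
          (sepLM i (j - α) h1 (by omega))
      · exact absurd (by rwa [hval1 i h1, hval3 j (by omega)] at hij)
          (sepLR i (j - α - L) h1 (by omega) (by omega))
    · by_cases h3 : i ≤ α + L
      · exact absurd (by rw [hval1 j h2, hval2 i (by omega) h3] at hij; exact hij.symm)
          (sepLM j (i - α) h2 (by omega))
      · exact absurd (by rw [hval1 j h2, hval3 i (by omega)] at hij; exact hij.symm)
          (sepLR j (i - α - L) h2 (by omega) (by omega))
    · by_cases h3 : i ≤ α + L <;> by_cases h4 : j ≤ α + L
      · have := iM (i - α) (j - α) (by omega) (by omega)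
          (by rwa [hval2 i (by omega) h3, hval2 j (by omega) h4] at hij)
        omega
      · exact absurd (by rwa [hval2 i (by omega) h3, hval3 j (by omega)] at hij)
          (sepMR (i - α) (j - α - L) (by omega) (by omega) (by omega))
      · exact absurd (by rw [hval2 j (by omega) h4, hval3 i (by omega)] at hij; exact hij.symm)
          (sepMR (j - α) (i - α - L) (by omega) (by omega) (by omega))
      · have := iR (i - α - L) (j - α - L) (by omega) (by omega)
          (by rwa [hval3 i (by omega), hval3 j (by omega)] at hij)
        omega



lemma S_eq {k t r a b a' b' : ℕ} (h : S k t r a b) (ha : a' = a) (hb : b' = b) :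
    S k t r a' b' := by subst ha; subst hb; exact h

lemma S_consec {k t r p j : ℕ} (hp : p < t) (hj : j + 1 < k - 3) :
    S k t r (k + p * (k - 3) + j) (k + p * (k - 3) + (j + 1)) :=
  Or.inl (Or.inr (Or.inr (Or.inl ⟨p, hp, j, hj, rfl, by omega⟩)))

lemma S_start {k t r p : ℕ} (hp : p < t) : S k t r 1 (k + p * (k - 3)) :=
  Or.inl (Or.inr (Or.inl ⟨rfl, p, hp, rfl⟩))

lemma S_end {k t r p : ℕ} (hp : p < t) : S k t r (k + p * (k - 3) + (k - 4)) 2 :=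
  Or.inl (Or.inr (Or.inr (Or.inr (Or.inl ⟨rfl, p, hp, rfl⟩))))

lemma S_pend {k t r i : ℕ} (hi : i < r) : S k t r i (k + t * (k - 3) + i) :=
  Or.inl (Or.inr (Or.inr (Or.inr (Or.inr ⟨i, hi, rfl, rfl⟩))))

lemma mul_block {k p q : ℕ} (h : p < q) : p * (k - 3) + (k - 3) ≤ q * (k - 3) := by
  have := Nat.mul_le_mul_right (k - 3) (Nat.succ_le_of_lt h)
  simpa [Nat.succ_mul] using this

lemma block_le {k t p : ℕ} (h : p < t) : p * (k - 3) + (k - 3) ≤ t * (k - 3) := mul_block h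

lemma decomp {k t x : ℕ} (hk : 5 ≤ k) (hx1 : k ≤ x) (hx2 : x < k + t * (k - 3)) :
    ∃ p j, p < t ∧ j ≤ k - 4 ∧ x = k + p * (k - 3) + j := by
  have h3 : 0 < k - 3 := by omega
  refine ⟨(x - k) / (k - 3), (x - k) % (k - 3), ?_, ?_, ?_⟩
  · rw [Nat.div_lt_iff_lt_mul h3]
    have : x - k < t * (k - 3) := by omega
    omega
  · have := Nat.mod_lt (x - k) h3
    omega
  · have := Nat.div_add_mod (x - k) (k - 3)
    have e : (k - 3) * ((x - k) / (k - 3)) = ((x - k) / (k - 3)) * (k - 3) := Nat.mul_comm _ _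
    omega

lemma decomp_unique {k p q j j' : ℕ} (hk : 5 ≤ k) (hj : j ≤ k - 4) (hj' : j' ≤ k - 4)
    (h : k + p * (k - 3) + j = k + q * (k - 3) + j') : p = q ∧ j = j' := by
  rcases lt_trichotomy p q with h1 | h1 | h1
  · have := mul_block (k := k) h1; omega
  · subst h1; omega
  · have := mul_block (k := k) h1; omega

section Cases

variable {k t r n : ℕ}

lemma caseWW (hk : 5 ≤ k) (hn : n = k + t * (k - 3) + r) {a b : ℕ}
    (ha : a < k) (hb : b < k) (hab : a ≠ b) : Spec k t r n a b := by
  obtain ⟨gM, m0, mL, mc, mb, mi⟩ := wheel hk ha hb hab (Or.inl ⟨by omega, le_refl _⟩)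
  exact ⟨gM, m0, mL, fun i hi => (mc i hi).S,
    fun i hi => lt_of_lt_of_le (mb i hi) (by omega), mi⟩

lemma caseWI (hk : 5 ≤ k) (hn : n = k + t * (k - 3) + r) {a b p j : ℕ}
    (ha : a < k) (hp : p < t) (hj : j ≤ k - 4) (hb : b = k + p * (k - 3) + j)
    (hS : ¬ S k t r a b) : Spec k t r n a b := by
  have hkn : k ≤ n := by omega
  have hbl := block_le (k := k) hp
  by_cases ha1 : a = 1
  · -- a = 1 : path 1 → 2 in wheel of length j+2, then descend along path p to b
    have hj1 : j ≠ 0 := by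
      intro h; subst h; subst ha1
      have : S k t r 1 b := by rw [hb]; simpa using S_start hp
      exact hS this
    obtain ⟨gM, m0, mL, mc, mb, mi⟩ := wheel (x := 1) (y := 2) (L := j + 2) hk
      (by omega) (by omega) (by omega) (Or.inl ⟨by omega, by omega⟩)
    have h := glue (k := k) (t := t) (r := r) (gL := fun _ => a) (gR := fun m => if m = 0 then 2 else k + p * (k - 3) + (k - 3 - m))
      (α := 0) (β := k - 3 - j) hk hkn (by omega) (by rw [ha1, ← m0]) rfl mL (by simp)
      (fun i hi => absurd hi (by omega)) mc ?_ (fun i _ => by show a < n; omega) mb ?_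
      (fun i j _ _ _ => by omega) mi ?_ (fun i j hi _ => absurd hi (by omega)) ?_
      (fun i j hi _ _ => absurd hi (by omega))
    · try dsimp only at h
      have e : (if k - 3 - j = 0 then 2 else k + p * (k - 3) + (k - 3 - (k - 3 - j))) = b := by
        rw [if_neg (by omega), hb]; congr 1; omega
      rwa [e] at h
    · -- chain of right tail
      intro m hm
      try dsimp only
      by_cases h0 : m = 0
      · subst h0
        rw [if_pos rfl, if_neg (by omega)]
        exact S_eq (S_symm (S_end (k := k) (t := t) (r := r) hp)) (by omega) (by omega)
      · rw [if_neg h0, if_neg (by omega)]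
        exact S_eq (S_symm (S_consec (k := k) (t := t) (r := r) (j := k - 3 - m - 1) hp (by omega))) (by omega) (by omega)
    · -- bounds of right tail
      intro m hm
      try dsimp only
      by_cases h0 : m = 0
      · subst h0; rw [if_pos rfl]; omega
      · rw [if_neg h0]; omega
    · -- injectivity of right tail
      intro i j hi hj hij
      try dsimp only at hij
      by_cases h0 : i = 0 <;> by_cases h1 : j = 0
      · omega
      · rw [if_pos h0, if_neg h1] at hij; omega
      · rw [if_neg h0, if_pos h1] at hij; omega
      · rw [if_neg h0, if_neg h1] at hij; omega
    · -- sepMR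
      intro i j hi hj0 hj hij
      try dsimp only at hij
      rw [if_neg (by omega)] at hij
      have := mb i hi
      omega
  · -- a ≠ 1 : wheel path a → 1 of length k-2-j, then descend into path p
    obtain ⟨gM, m0, mL, mc, mb, mi⟩ := wheel (x := a) (y := 1) (L := k - 2 - j) hk
      ha (by omega) ha1 (Or.inl ⟨by omega, by omega⟩)
    have h := glue (k := k) (t := t) (r := r) (gL := fun _ => a) (gR := fun m => if m = 0 then 1 else k + p * (k - 3) + (m - 1))
      (α := 0) (β := j + 1) hk hkn (by omega) (by rw [← m0]) rfl mL (by simp)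
      (fun i hi => absurd hi (by omega)) mc ?_ (fun i _ => by show a < n; omega) mb ?_
      (fun i j _ _ _ => by omega) mi ?_ (fun i j hi _ => absurd hi (by omega)) ?_
      (fun i j hi _ _ => absurd hi (by omega))
    · try dsimp only at h
      have e : (if j + 1 = 0 then 1 else k + p * (k - 3) + (j + 1 - 1)) = b := by
        rw [if_neg (by omega), hb]; omega
      rwa [e] at h
    · intro m hm
      try dsimp only
      by_cases h0 : m = 0
      · subst h0
        rw [if_pos rfl, if_neg (by omega)]
        exact S_eq (S_start (k := k) (t := t) (r := r) hp) (by omega) (by omega)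
      · rw [if_neg h0, if_neg (by omega)]
        exact S_eq (S_consec (k := k) (t := t) (r := r) (j := m - 1) hp (by omega)) (by omega) (by omega)
    · intro m hm
      try dsimp only
      by_cases h0 : m = 0
      · subst h0; rw [if_pos rfl]; omega
      · rw [if_neg h0]; omega
    · intro i j hi hj hij
      try dsimp only at hij
      by_cases h0 : i = 0 <;> by_cases h1 : j = 0
      · omega
      · rw [if_pos h0, if_neg h1] at hij; omega
      · rw [if_neg h0, if_pos h1] at hij; omega
      · rw [if_neg h0, if_neg h1] at hij; omega
    · intro i j hi hj0 hj hij
      try dsimp only at hij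
      rw [if_neg (by omega)] at hij
      have := mb i hi
      omega

lemma caseWP (hk : 5 ≤ k) (hn : n = k + t * (k - 3) + r) (hrk : r ≤ k) {a i0 : ℕ}
    (ha : a < k) (hi0 : i0 < r) (hS : ¬ S k t r a (k + t * (k - 3) + i0)) :
    Spec k t r n a (k + t * (k - 3) + i0) := by
  have hkn : k ≤ n := by omega
  have hai : a ≠ i0 := by
    intro h; exact hS (by rw [h]; exact S_pend hi0)
  obtain ⟨gM, m0, mL, mc, mb, mi⟩ := wheel (x := a) (y := i0) (L := k - 2) hk
    ha (by omega) hai (Or.inl ⟨by omega, by omega⟩)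
  have h := glue (k := k) (t := t) (r := r) (gL := fun _ => a)
    (gR := fun m => if m = 0 then i0 else k + t * (k - 3) + i0)
    (α := 0) (β := 1) hk hkn (by omega) (by rw [← m0]) rfl mL (by simp)
    (fun i hi => absurd hi (by omega)) mc ?_ (fun i _ => by show a < n; omega) mb ?_
    (fun i j _ _ _ => by omega) mi ?_ (fun i j hi _ => absurd hi (by omega)) ?_
    (fun i j hi _ _ => absurd hi (by omega))
  · try dsimp only at h
    rwa [if_neg (by omega)] at h
  · intro m hm
    try dsimp only
    have h0 : m = 0 := by omega
    subst h0
    rw [if_pos rfl, if_neg (by omega)]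
    exact S_pend hi0
  · intro m hm
    try dsimp only
    by_cases h0 : m = 0
    · subst h0; rw [if_pos rfl]; omega
    · rw [if_neg h0]; omega
  · intro i j hi hj hij
    try dsimp only at hij
    by_cases h0 : i = 0 <;> by_cases h1 : j = 0
    · omega
    · rw [if_pos h0, if_neg h1] at hij; omega
    · rw [if_neg h0, if_pos h1] at hij; omega
    · omega
  · intro i j hi hj0 hj hij
    try dsimp only at hij
    rw [if_neg (by omega)] at hij
    have := mb i hi
    omega

lemma caseII (hk : 5 ≤ k) (hn : n = k + t * (k - 3) + r) {p p' j j' : ℕ}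
    (hp : p < t) (hp' : p' < t) (hj : j ≤ k - 4) (hj' : j' ≤ k - 4) (hjj' : j ≤ j')
    (hab : k + p * (k - 3) + j ≠ k + p' * (k - 3) + j')
    (hS : ¬ S k t r (k + p * (k - 3) + j) (k + p' * (k - 3) + j')) :
    Spec k t r n (k + p * (k - 3) + j) (k + p' * (k - 3) + j') := by
  have hkn : k ≤ n := by omega
  have hbl := block_le (k := k) hp
  have hbl' := block_le (k := k) hp'
  have hcond : p = p' → j + 2 ≤ j' := by
    intro h; subst h
    rcases Nat.lt_or_ge (j + 1) j' with h1 | h1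
    · omega
    · have h2 : j' = j ∨ j' = j + 1 := by omega
      rcases h2 with h2 | h2
      · exact absurd (by rw [h2]) hab
      · subst h2
        exact absurd (S_consec hp (by omega)) hS
  have hL : (2 ≤ j' - j + 1 ∧ j' - j + 1 ≤ k - 1) ∨ (j' - j + 1 = 1 ∧ wS k 1 2) := by
    rcases eq_or_ne j j' with rfl | h
    · exact Or.inr ⟨by omega, Or.inl (Or.inr (Or.inl (by omega)))⟩
    · exact Or.inl (by omega)
  obtain ⟨gM, m0, mL, mc, mb, mi⟩ := wheel (x := 1) (y := 2) (L := j' - j + 1) hk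
    (by omega) (by omega) (by omega) hL
  have h := glue (k := k) (t := t) (r := r)
    (gL := fun i => if i ≤ j then k + p * (k - 3) + j - i else 1)
    (gR := fun m => if m = 0 then 2 else k + p' * (k - 3) + (k - 3 - m))
    (α := j + 1) (β := k - 3 - j') hk hkn (by omega)
    (by (try dsimp only); rw [if_neg (by omega), ← m0]) rfl mL (by simp)
    ?_ mc ?_ ?_ mb ?_ ?_ mi ?_ ?_ ?_ ?_
  · try dsimp only at h
    rw [if_pos (by omega), if_neg (by omega)] at h
    have e1 : k + p * (k - 3) + j - 0 = k + p * (k - 3) + j := by omega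
    have e2 : k - 3 - (k - 3 - j') = j' := by omega
    rwa [e1, e2] at h
  · -- cL : descending tail
    intro i hi
    try dsimp only
    by_cases h0 : i = j
    · subst h0
      rw [if_pos (le_refl _), if_neg (by omega)]
      exact S_eq (S_symm (S_start hp)) (by omega) rfl
    · rw [if_pos (by omega), if_pos (by omega)]
      exact S_eq (S_symm (S_consec (j := j - i - 1) hp (by omega))) (by omega) (by omega)
  · -- cR
    intro m hm
    try dsimp only
    by_cases h0 : m = 0
    · subst h0
      rw [if_pos rfl, if_neg (by omega)]
      exact S_eq (S_symm (S_end hp')) (by omega) (by omega)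
    · rw [if_neg h0, if_neg (by omega)]
      exact S_eq (S_symm (S_consec (j := k - 3 - m - 1) hp' (by omega))) (by omega) (by omega)
  · intro i hi; (try dsimp only); split_ifs <;> omega
  · intro m hm; (try dsimp only); split_ifs <;> omega
  · intro i i' hi hi' hij; (try dsimp only at hij); split_ifs at hij <;> omega
  · intro m m' hm hm' hij; (try dsimp only at hij); split_ifs at hij <;> omega
  · -- sepLM
    intro i m hi hm hij
    try dsimp only at hij
    rw [if_pos (by omega)] at hij
    have := mb m hm
    omega
  · -- sepMR
    intro i m hi hm0 hm hij
    try dsimp only at hij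
    rw [if_neg (by omega)] at hij
    have := mb i hi
    omega
  · -- sepLR
    intro i m hi hm0 hm hij
    try dsimp only at hij
    rw [if_pos (by omega), if_neg (by omega)] at hij
    rcases eq_or_ne p p' with rfl | hpp
    · have := hcond rfl; omega
    · have h2 : k + p * (k - 3) + (j - i) = k + p' * (k - 3) + (k - 3 - m) := by omega
      exact hpp (decomp_unique hk (by omega) (by omega) h2).1

lemma caseIP_via2 (hk : 5 ≤ k) (hn : n = k + t * (k - 3) + r) (hrk : r ≤ k) {p j i0 : ℕ}
    (hp : p < t) (hj : j ≤ k - 4) (hi0 : i0 < r) (hne : i0 ≠ 2) (hc : i0 = 1 ∨ 1 ≤ j) :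
    Spec k t r n (k + p * (k - 3) + j) (k + t * (k - 3) + i0) := by
  have hkn : k ≤ n := by omega
  have hbl := block_le (k := k) hp
  have hL : (2 ≤ j + 1 ∧ j + 1 ≤ k - 1) ∨ (j + 1 = 1 ∧ wS k 2 i0) := by
    rcases hc with hc | hc
    · rcases Nat.eq_zero_or_pos j with rfl | h
      · exact Or.inr ⟨rfl, Or.inr (Or.inr (Or.inl (by omega)))⟩
      · exact Or.inl (by omega)
    · exact Or.inl (by omega)
  obtain ⟨gM, m0, mL, mc, mb, mi⟩ := wheel (x := 2) (y := i0) (L := j + 1) hk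
    (by omega) (by omega) (Ne.symm hne) hL
  have h := glue (k := k) (t := t) (r := r)
    (gL := fun i => if i ≤ k - 4 - j then k + p * (k - 3) + j + i else 2)
    (gR := fun m => if m = 0 then i0 else k + t * (k - 3) + i0)
    (α := k - 3 - j) (β := 1) hk hkn (by omega)
    (by (try dsimp only); rw [if_neg (by omega), ← m0]) rfl mL (by simp)
    ?_ mc ?_ ?_ mb ?_ ?_ mi ?_ ?_ ?_ ?_
  · try dsimp only at h
    rw [if_pos (by omega), if_neg (by omega)] at h
    have e1 : k + p * (k - 3) + j + 0 = k + p * (k - 3) + j := by omega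
    rwa [e1] at h
  · -- cL ascending tail
    intro i hi
    try dsimp only
    by_cases h0 : i = k - 4 - j
    · subst h0
      rw [if_pos (le_refl _), if_neg (by omega)]
      exact S_eq (S_end hp) (by omega) rfl
    · rw [if_pos (by omega), if_pos (by omega)]
      exact S_eq (S_consec (j := j + i) hp (by omega)) (by omega) (by omega)
  · intro m hm
    try dsimp only
    have h0 : m = 0 := by omega
    subst h0
    rw [if_pos rfl, if_neg (by omega)]
    exact S_pend hi0
  · intro i hi; (try dsimp only); split_ifs <;> omega
  · intro m hm; (try dsimp only); split_ifs <;> omega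
  · intro i i' hi hi' hij; (try dsimp only at hij); split_ifs at hij <;> omega
  · intro m m' hm hm' hij; (try dsimp only at hij); split_ifs at hij <;> omega
  · intro i m hi hm hij
    try dsimp only at hij
    rw [if_pos (by omega)] at hij
    have := mb m hm
    omega
  · intro i m hi hm0 hm hij
    try dsimp only at hij
    rw [if_neg (by omega)] at hij
    have := mb i hi
    omega
  · intro i m hi hm0 hm hij
    try dsimp only at hij
    rw [if_pos (by omega), if_neg (by omega)] at hij
    omega

lemma caseIP_via1 (hk : 5 ≤ k) (hn : n = k + t * (k - 3) + r) (hrk : r ≤ k) {p j i0 : ℕ}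
    (hp : p < t) (hj : j ≤ k - 4) (hi0 : i0 < r) (hne : i0 ≠ 1) (hc : i0 = 2 ∨ j ≤ k - 5) :
    Spec k t r n (k + p * (k - 3) + j) (k + t * (k - 3) + i0) := by
  have hkn : k ≤ n := by omega
  have hbl := block_le (k := k) hp
  have hL : (2 ≤ k - 3 - j ∧ k - 3 - j ≤ k - 1) ∨ (k - 3 - j = 1 ∧ wS k 1 i0) := by
    rcases hc with hc | hc
    · rcases Nat.lt_or_ge j (k - 4) with h | h
      · exact Or.inl (by omega)
      · refine Or.inr ⟨by omega, Or.inl (Or.inr (Or.inl (by omega)))⟩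
    · exact Or.inl (by omega)
  obtain ⟨gM, m0, mL, mc, mb, mi⟩ := wheel (x := 1) (y := i0) (L := k - 3 - j) hk
    (by omega) (by omega) (Ne.symm hne) hL
  have h := glue (k := k) (t := t) (r := r)
    (gL := fun i => if i ≤ j then k + p * (k - 3) + j - i else 1)
    (gR := fun m => if m = 0 then i0 else k + t * (k - 3) + i0)
    (α := j + 1) (β := 1) hk hkn (by omega)
    (by (try dsimp only); rw [if_neg (by omega), ← m0]) rfl mL (by simp)
    ?_ mc ?_ ?_ mb ?_ ?_ mi ?_ ?_ ?_ ?_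
  · try dsimp only at h
    rw [if_pos (by omega), if_neg (by omega)] at h
    have e1 : k + p * (k - 3) + j - 0 = k + p * (k - 3) + j := by omega
    rwa [e1] at h
  · intro i hi
    try dsimp only
    by_cases h0 : i = j
    · subst h0
      rw [if_pos (le_refl _), if_neg (by omega)]
      exact S_eq (S_symm (S_start hp)) (by omega) rfl
    · rw [if_pos (by omega), if_pos (by omega)]
      exact S_eq (S_symm (S_consec (j := j - i - 1) hp (by omega))) (by omega) (by omega)
  · intro m hm
    try dsimp only
    have h0 : m = 0 := by omega
    subst h0
    rw [if_pos rfl, if_neg (by omega)]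
    exact S_pend hi0
  · intro i hi; (try dsimp only); split_ifs <;> omega
  · intro m hm; (try dsimp only); split_ifs <;> omega
  · intro i i' hi hi' hij; (try dsimp only at hij); split_ifs at hij <;> omega
  · intro m m' hm hm' hij; (try dsimp only at hij); split_ifs at hij <;> omega
  · intro i m hi hm hij
    try dsimp only at hij
    rw [if_pos (by omega)] at hij
    have := mb m hm
    omega
  · intro i m hi hm0 hm hij
    try dsimp only at hij
    rw [if_neg (by omega)] at hij
    have := mb i hi
    omega
  · intro i m hi hm0 hm hij
    try dsimp only at hij
    rw [if_pos (by omega), if_neg (by omega)] at hij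
    omega

lemma casePP (hk : 5 ≤ k) (hn : n = k + t * (k - 3) + r) (hrk : r ≤ k) {i1 i2 : ℕ}
    (hi1 : i1 < r) (hi2 : i2 < r) (hne : i1 ≠ i2) :
    Spec k t r n (k + t * (k - 3) + i1) (k + t * (k - 3) + i2) := by
  have hkn : k ≤ n := by omega
  obtain ⟨gM, m0, mL, mc, mb, mi⟩ := wheel (x := i1) (y := i2) (L := k - 3) hk
    (by omega) (by omega) hne (Or.inl ⟨by omega, by omega⟩)
  have h := glue (k := k) (t := t) (r := r)
    (gL := fun i => if i = 0 then k + t * (k - 3) + i1 else i1)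
    (gR := fun m => if m = 0 then i2 else k + t * (k - 3) + i2)
    (α := 1) (β := 1) hk hkn (by omega)
    (by (try dsimp only); rw [if_neg (by omega), ← m0]) rfl mL (by simp)
    ?_ mc ?_ ?_ mb ?_ ?_ mi ?_ ?_ ?_ ?_
  · try dsimp only at h
    rwa [if_pos rfl, if_neg (by omega)] at h
  · intro i hi
    try dsimp only
    have h0 : i = 0 := by omega
    subst h0
    rw [if_pos rfl, if_neg (by omega)]
    exact S_symm (S_pend hi1)
  · intro m hm
    try dsimp only
    have h0 : m = 0 := by omega
    subst h0
    rw [if_pos rfl, if_neg (by omega)]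
    exact S_pend hi2
  · intro i hi; (try dsimp only); split_ifs <;> omega
  · intro m hm; (try dsimp only); split_ifs <;> omega
  · intro i i' hi hi' hij; (try dsimp only at hij); split_ifs at hij <;> omega
  · intro m m' hm hm' hij; (try dsimp only at hij); split_ifs at hij <;> omega
  · intro i m hi hm hij
    try dsimp only at hij
    rw [if_pos (by omega)] at hij
    have := mb m hm
    omega
  · intro i m hi hm0 hm hij
    try dsimp only at hij
    rw [if_neg (by omega)] at hij
    have := mb i hi
    omega
  · intro i m hi hm0 hm hij
    try dsimp only at hij
    rw [if_pos (by omega), if_neg (by omega)] at hij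
    omega

lemma key (hk : 5 ≤ k) (hn : n = k + t * (k - 3) + r) (hr4 : 4 ≤ r) (hrk : r ≤ k)
    {a b : ℕ} (ha : a < n) (hb : b < n) (hab : a ≠ b) (hS : ¬ S k t r a b) :
    Spec k t r n a b := by
  have hSba : ¬ S k t r b a := fun h => hS (S_symm h)
  have hIP : ∀ x y : ℕ, k ≤ x → x < k + t * (k - 3) → k + t * (k - 3) ≤ y → y < n →
      Spec k t r n x y := by
    intro x y hx1 hx2 hy1 hy2
    obtain ⟨p, j, hp, hj, rfl⟩ := decomp hk hx1 hx2
    obtain ⟨i0, hi0, rfl⟩ : ∃ i0, i0 < r ∧ y = k + t * (k - 3) + i0 :=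
      ⟨y - (k + t * (k - 3)), by omega, by omega⟩
    by_cases h1 : i0 = 1
    · exact caseIP_via2 hk hn hrk hp hj hi0 (by omega) (Or.inl h1)
    by_cases h2 : i0 = 2
    · exact caseIP_via1 hk hn hrk hp hj hi0 h1 (Or.inl h2)
    by_cases h3 : 1 ≤ j
    · exact caseIP_via2 hk hn hrk hp hj hi0 h2 (Or.inr h3)
    · exact caseIP_via1 hk hn hrk hp hj hi0 h1 (Or.inr (by omega))
  have hWI : ∀ x y : ℕ, x < k → k ≤ y → y < k + t * (k - 3) → ¬ S k t r x y →
      Spec k t r n x y := by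
    intro x y hx hy1 hy2 hS'
    obtain ⟨p, j, hp, hj, rfl⟩ := decomp hk hy1 hy2
    exact caseWI hk hn hx hp hj rfl hS'
  have hWP : ∀ x y : ℕ, x < k → k + t * (k - 3) ≤ y → y < n → ¬ S k t r x y →
      Spec k t r n x y := by
    intro x y hx hy1 hy2 hS'
    obtain ⟨i0, hi0, rfl⟩ : ∃ i0, i0 < r ∧ y = k + t * (k - 3) + i0 :=
      ⟨y - (k + t * (k - 3)), by omega, by omega⟩
    exact caseWP hk hn hrk hx hi0 hS'
  by_cases haw : a < k <;> by_cases hbw : b < k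
  · exact caseWW hk hn haw hbw hab
  · by_cases hbi : b < k + t * (k - 3)
    · exact hWI a b haw (by omega) hbi hS
    · exact hWP a b haw (by omega) (by omega) hS
  · by_cases hai : a < k + t * (k - 3)
    · exact (hWI b a hbw (by omega) hai hSba).symm
    · exact (hWP b a hbw (by omega) (by omega) hSba).symm
  · by_cases hai : a < k + t * (k - 3) <;> by_cases hbi : b < k + t * (k - 3)
    · -- both internal
      obtain ⟨p, j, hp, hj, rfl⟩ := decomp hk (by omega) hai
      obtain ⟨p', j', hp', hj', rfl⟩ := decomp hk (by omega) hbi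
      rcases Nat.le_total j j' with hjj | hjj
      · exact caseII hk hn hp hp' hj hj' hjj hab hS
      · exact (caseII hk hn hp' hp hj' hj hjj (Ne.symm hab) hSba).symm
    · exact hIP a b (by omega) hai (by omega) hb
    · exact (hIP b a (by omega) hbi (by omega) ha).symm
    · -- both pendant
      obtain ⟨i1, hi1, rfl⟩ : ∃ i1, i1 < r ∧ a = k + t * (k - 3) + i1 :=
        ⟨a - (k + t * (k - 3)), by omega, by omega⟩
      obtain ⟨i2, hi2, rfl⟩ : ∃ i2, i2 < r ∧ b = k + t * (k - 3) + i2 :=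
        ⟨b - (k + t * (k - 3)), by omega, by omega⟩
      exact casePP hk hn hrk hi1 hi2 (by omega)

end Cases


def SG (n k t r : ℕ) : SimpleGraph (Fin n) where
  Adj u v := u ≠ v ∧ S k t r u.val v.val
  symm := by
    constructor
    intro u v ⟨h1, h2⟩
    exact ⟨h1.symm, S_symm h2⟩
  loopless := by
    constructor
    intro u ⟨h1, _⟩
    exact h1 rfl

def cl (n : ℕ) (hn : 0 < n) (x : ℕ) : Fin n := ⟨min x (n - 1), by omega⟩

lemma cl_val {n : ℕ} (hn : 0 < n) {x : ℕ} (hx : x < n) : (cl n hn x).val = x := by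
  simp only [cl]; omega

lemma cl_eq {n : ℕ} (hn : 0 < n) {x : ℕ} {u : Fin n} (hx : x < n) (h : u.val = x) :
    cl n hn x = u := Fin.ext (by rw [cl_val hn hx, h])

lemma walk_of_g {n : ℕ} (hn0 : 0 < n) (H : SimpleGraph (Fin n)) (g : ℕ → ℕ) :
    ∀ m : ℕ, (∀ i, i < m → H.Adj (cl n hn0 (g i)) (cl n hn0 (g (i + 1)))) →
    ∃ p : H.Walk (cl n hn0 (g 0)) (cl n hn0 (g m)),
      p.length = m ∧ p.support = (List.range (m + 1)).map (fun i => cl n hn0 (g i)) := by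
  intro m
  induction m with
  | zero => exact fun _ => ⟨Walk.nil, rfl, by simp [List.range_succ]⟩
  | succ m ih =>
    intro hadj
    obtain ⟨p, hlen, hsup⟩ := ih (fun i hi => hadj i (by omega))
    refine ⟨p.concat (hadj m (by omega)), by simp [hlen], ?_⟩
    rw [Walk.support_concat, hsup,
      show List.range (m + 1 + 1) = List.range (m + 1) ++ [m + 1] from List.range_succ,
      List.map_append]
    rfl

lemma semisat {k t r n : ℕ} (hk : 5 ≤ k) (hn : n = k + t * (k - 3) + r)
    (hr4 : 4 ≤ r) (hrk : r ≤ k) : IsCkSemisaturated k (SG n k t r) := by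
  intro u v hne hnadj
  have hn0 : 0 < n := by omega
  have hS : ¬ S k t r u.val v.val := fun h => hnadj ⟨hne, h⟩
  obtain ⟨g, h0, hL, hc, hb, hinj⟩ :=
    key hk hn hr4 hrk u.isLt v.isLt (fun h => hne (Fin.ext h)) hS
  have hadj : ∀ i, i < k - 1 → (SG n k t r).Adj (cl n hn0 (g i)) (cl n hn0 (g (i + 1))) := by
    intro i hi
    refine ⟨?_, ?_⟩
    · intro h
      have := hinj i (i + 1) (by omega) (by omega)
        (by rw [← cl_val hn0 (hb i (by omega)), ← cl_val hn0 (hb (i+1) (by omega)), h])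
      omega
    · rw [cl_val hn0 (hb i (by omega)), cl_val hn0 (hb (i+1) (by omega))]
      exact hc i hi
  obtain ⟨p, hlen, hsup⟩ := walk_of_g hn0 (SG n k t r) g (k - 1) hadj
  have e0 : cl n hn0 (g 0) = u := cl_eq hn0 (by rw [h0]; exact u.isLt) (h0.symm)
  have eL : cl n hn0 (g (k - 1)) = v := cl_eq hn0 (by rw [hL]; exact v.isLt) (hL.symm)
  set p1 : (SG n k t r).Walk u v := p.copy e0 eL with hp1
  have hp1path : p1.IsPath := by
    rw [Walk.isPath_def, hp1, Walk.support_copy, hsup]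
    refine List.Nodup.map_on ?_ List.nodup_range
    intro i hi j hj hij
    rw [List.mem_range] at hi hj
    have : g i = g j := by
      rw [← cl_val hn0 (hb i (by omega)), ← cl_val hn0 (hb j (by omega)), hij]
    exact hinj i j (by omega) (by omega) this
  have hle : SG n k t r ≤ addEdge (SG n k t r) u v := le_sup_left
  set p2 := p1.mapLe hle with hp2
  have hp2edges : p2.edges = p1.edges := by
    rw [hp2]
    exact Walk.edges_mapLe_eq_edges hle p1
  have hadj2 : (addEdge (SG n k t r) u v).Adj v u := by
    refine Or.inr ?_
    rw [fromEdgeSet_adj]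
    exact ⟨by rw [Sym2.eq_swap]; rfl, hne.symm⟩
  refine ⟨v, Walk.cons hadj2 p2, ?_, ?_, ?_⟩
  · rw [Walk.cons_isCycle_iff]
    refine ⟨hp1path.mapLe hle, ?_⟩
    intro hmem
    rw [hp2edges] at hmem
    have := p1.edges_subset_edgeSet hmem
    rw [mem_edgeSet] at this
    exact hnadj ((SG n k t r).symm.symm _ _ this)
  · have : p2.length = p1.length := by rw [hp2]; exact Walk.length_map _ _
    rw [Walk.length_cons, this, hp1, Walk.length_copy, hlen]
    omega
  · rw [Walk.edges_cons, Sym2.eq_swap]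
    exact List.mem_cons_self




lemma edge_bound {k t r n : ℕ} (hk : 5 ≤ k) (hn : n = k + t * (k - 3) + r)
    (hr4 : 4 ≤ r) (hrk : r ≤ k) :
    (SG n k t r).edgeSet.ncard ≤ 2 * (k - 1) + t * (k - 2) + r := by
  classical
  have hn0 : 0 < n := by omega
  set F1 := (Finset.range (k-1)).image (fun i => s(cl n hn0 0, cl n hn0 (1+i))) with hF1
  set F2 := (Finset.range (k-1)).image
    (fun i => if i + 2 ≤ k - 1 then s(cl n hn0 (1+i), cl n hn0 (2+i)) else s(cl n hn0 1, cl n hn0 (k-1))) with hF2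
  set F3 := ((Finset.range t) ×ˢ (Finset.range (k-2))).image (fun q =>
     if q.2 = 0 then s(cl n hn0 1, cl n hn0 (k + q.1*(k-3)))
     else if q.2 ≤ k-4 then s(cl n hn0 (k + q.1*(k-3) + q.2 - 1), cl n hn0 (k + q.1*(k-3) + q.2))
     else s(cl n hn0 (k + q.1*(k-3) + (k-4)), cl n hn0 2)) with hF3
  set F4 := (Finset.range r).image (fun i => s(cl n hn0 i, cl n hn0 (k + t*(k-3) + i))) with hF4
  have hRB : ∀ (a b : ℕ) (u v : Fin n), RB k t r a b → u.val = a → v.val = b →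
      s(u, v) ∈ F1 ∪ F2 ∪ F3 ∪ F4 := by
    intro a b u v hR hu hv
    rcases hR with (h | h | h) | h | h | h | h
    · -- hub-rim
      obtain ⟨ha0, hb1, hbk⟩ := h
      refine Finset.mem_union_left _ (Finset.mem_union_left _ (Finset.mem_union_left _ ?_))
      rw [hF1, Finset.mem_image]
      refine ⟨b - 1, Finset.mem_range.mpr (by omega), ?_⟩
      try dsimp only
      rw [show 1 + (b - 1) = b by omega, cl_eq (u := u) hn0 (show 0 < n by omega) (by omega),
        cl_eq hn0 (show b < n by omega) hv]
    · -- rim consecutive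
      obtain ⟨ha1, hba, hbk⟩ := h
      refine Finset.mem_union_left _ (Finset.mem_union_left _ (Finset.mem_union_right _ ?_))
      rw [hF2, Finset.mem_image]
      refine ⟨a - 1, Finset.mem_range.mpr (by omega), ?_⟩
      try dsimp only
      rw [if_pos (by omega), show 1 + (a - 1) = a by omega, show 2 + (a - 1) = b by omega,
        cl_eq hn0 (show a < n by omega) hu, cl_eq hn0 (show b < n by omega) hv]
    · -- rim wrap
      obtain ⟨ha1, hbk⟩ := h
      refine Finset.mem_union_left _ (Finset.mem_union_left _ (Finset.mem_union_right _ ?_))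
      rw [hF2, Finset.mem_image]
      refine ⟨k - 2, Finset.mem_range.mpr (by omega), ?_⟩
      try dsimp only
      rw [if_neg (by omega), cl_eq (u := u) hn0 (show 1 < n by omega) (by omega),
        cl_eq (u := v) hn0 (show k - 1 < n by omega) (by omega)]
    · -- path start
      obtain ⟨ha, p, hp, hb⟩ := h
      have hbl := block_le (k := k) hp
      refine Finset.mem_union_left _ (Finset.mem_union_right _ ?_)
      rw [hF3, Finset.mem_image]
      refine ⟨(p, 0), Finset.mem_product.mpr ⟨Finset.mem_range.mpr hp,
        Finset.mem_range.mpr (by omega)⟩, ?_⟩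
      dsimp only
      rw [if_pos rfl, cl_eq (u := u) hn0 (show 1 < n by omega) (by omega),
        cl_eq (u := v) hn0 (show k + p * (k - 3) < n by omega) (by omega)]
    · -- path consecutive
      obtain ⟨p, hp, j, hj, ha, hb⟩ := h
      have hbl := block_le (k := k) hp
      refine Finset.mem_union_left _ (Finset.mem_union_right _ ?_)
      rw [hF3, Finset.mem_image]
      refine ⟨(p, j + 1), Finset.mem_product.mpr ⟨Finset.mem_range.mpr hp,
        Finset.mem_range.mpr (by omega)⟩, ?_⟩
      dsimp only
      rw [if_neg (by omega), if_pos (by omega),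
        show k + p * (k - 3) + (j + 1) - 1 = a by omega,
        show k + p * (k - 3) + (j + 1) = b by omega,
        cl_eq hn0 (show a < n by omega) hu, cl_eq hn0 (show b < n by omega) hv]
    · -- path end
      obtain ⟨hb, p, hp, ha⟩ := h
      have hbl := block_le (k := k) hp
      refine Finset.mem_union_left _ (Finset.mem_union_right _ ?_)
      rw [hF3, Finset.mem_image]
      refine ⟨(p, k - 3), Finset.mem_product.mpr ⟨Finset.mem_range.mpr hp,
        Finset.mem_range.mpr (by omega)⟩, ?_⟩
      dsimp only
      rw [if_neg (by omega), if_neg (by omega),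
        cl_eq (u := u) hn0 (show k + p * (k - 3) + (k - 4) < n by omega) (by omega),
        cl_eq (u := v) hn0 (show 2 < n by omega) (by omega)]
    · -- pendant
      obtain ⟨i, hi, ha, hb⟩ := h
      refine Finset.mem_union_right _ ?_
      rw [hF4, Finset.mem_image]
      refine ⟨i, Finset.mem_range.mpr hi, ?_⟩
      try dsimp only
      rw [cl_eq (u := u) hn0 (show i < n by omega) (by omega),
        cl_eq (u := v) hn0 (show k + t * (k - 3) + i < n by omega) (by omega)]
  have hsub : (SG n k t r).edgeSet ⊆ ↑(F1 ∪ F2 ∪ F3 ∪ F4) := by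
    intro e he
    induction e using Sym2.ind with
    | _ u v =>
      rw [mem_edgeSet] at he
      obtain ⟨hne, hS⟩ := he
      rcases hS with h | h
      · exact_mod_cast hRB u.val v.val u v h rfl rfl
      · have := hRB v.val u.val v u h rfl rfl
        rw [Sym2.eq_swap] at this
        exact_mod_cast this
  have h1 : F1.card ≤ k - 1 := le_trans Finset.card_image_le (by simp)
  have h2 : F2.card ≤ k - 1 := le_trans Finset.card_image_le (by simp)
  have h3 : F3.card ≤ t * (k - 2) := le_trans Finset.card_image_le (by
    rw [Finset.card_product]; simp)
  have h4 : F4.card ≤ r := le_trans Finset.card_image_le (by simp)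
  have hcard : (F1 ∪ F2 ∪ F3 ∪ F4).card ≤ 2 * (k - 1) + t * (k - 2) + r := by
    have c1 := Finset.card_union_le (F1 ∪ F2 ∪ F3) F4
    have c2 := Finset.card_union_le (F1 ∪ F2) F3
    have c3 := Finset.card_union_le F1 F2
    omega
  calc (SG n k t r).edgeSet.ncard ≤ (↑(F1 ∪ F2 ∪ F3 ∪ F4) : Set (Sym2 (Fin n))).ncard :=
        Set.ncard_le_ncard hsub (Finset.finite_toSet _)
    _ = (F1 ∪ F2 ∪ F3 ∪ F4).card := Set.ncard_coe_finset _
    _ ≤ 2 * (k - 1) + t * (k - 2) + r := hcard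


end SSAT

theorem stmt_19 :
    (∀ n k : ℕ, 5 ≤ k → k + 4 ≤ n →
      ssatNum n k ≤ n + (n - 7) / (k - 3) + k - 3) ∧
    (∀ n : ℕ, 10 ≤ n → ssatNum n 6 ≤ ⌈(4 * (n : ℚ)) / 3⌉₊) := by
  have main : ∀ n k : ℕ, 5 ≤ k → k + 4 ≤ n →
      ssatNum n k ≤ n + (n - 7) / (k - 3) + k - 3 := by
    intro n k hk hnk
    obtain ⟨t, r, hn, hr4, hrk⟩ : ∃ t r, n = k + t * (k - 3) + r ∧ 4 ≤ r ∧ r ≤ k := by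
      have hdm := Nat.div_add_mod (n - k - 4) (k - 3)
      have hmlt : (n - k - 4) % (k - 3) < k - 3 := Nat.mod_lt _ (by omega)
      refine ⟨(n - k - 4) / (k - 3), 4 + (n - k - 4) % (k - 3), ?_, by omega, by omega⟩
      have hcm : (n - k - 4) / (k - 3) * (k - 3) = (k - 3) * ((n - k - 4) / (k - 3)) :=
        Nat.mul_comm _ _
      omega
    have hsemi := SSAT.semisat hk hn hr4 hrk
    have hcount := SSAT.edge_bound hk hn hr4 hrk
    have hmem : (SSAT.SG n k t r).edgeSet.ncard ∈
        {m : ℕ | ∃ G : SimpleGraph (Fin n), IsCkSemisaturated k G ∧ G.edgeSet.ncard = m} :=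
      ⟨SSAT.SG n k t r, hsemi, rfl⟩
    have h1 : ssatNum n k ≤ (SSAT.SG n k t r).edgeSet.ncard := Nat.sInf_le hmem
    have hdiv : t + 1 ≤ (n - 7) / (k - 3) := by
      rw [Nat.le_div_iff_mul_le (by omega : 0 < k - 3)]
      have e : (t + 1) * (k - 3) = t * (k - 3) + (k - 3) := Nat.succ_mul _ _
      omega
    have e2 : t * (k - 2) = t * (k - 3) + t := by
      rw [show k - 2 = (k - 3) + 1 by omega, Nat.mul_add, Nat.mul_one]
    omega
  refine ⟨main, ?_⟩
  intro n hn10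
  have h := main n 6 (by norm_num) (by omega)
  have hceil : ⌈(4 * (n : ℚ)) / 3⌉₊ = (4 * n + 2) / 3 := by
    apply le_antisymm
    · apply Nat.ceil_le.mpr
      rw [div_le_iff₀ (by norm_num : (0:ℚ) < 3)]
      have h2 : 4 * n ≤ ((4 * n + 2) / 3) * 3 := by omega
      exact_mod_cast h2
    · have h3 : ((4 * n + 2) / 3 - 1 : ℕ) < ⌈(4 * (n : ℚ)) / 3⌉₊ := by
        apply Nat.lt_ceil.mpr
        rw [lt_div_iff₀ (by norm_num : (0:ℚ) < 3)]
        have h4 : ((4 * n + 2) / 3 - 1 : ℕ) * 3 < 4 * n := by omega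
        exact_mod_cast h4
      omega
  omega
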